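/- Let A ∈ M(n,ℂ) satisfy the Okubo conditions, set A_j := E_j A for j = 1,…,p, and let λ ∈ ℂ with λ ≠ 0 and det(A + λI_n) ≠ 0 (i.e. −λ is not an eigenvalue of A). Then there exists a linear isomorphism ψ from the quotient space ℂ^{pn}/(K + L_λ) onto ℂ^n such that ψ ∘ Ḡ_j = (E_j(A + λI_n)) ∘ ψ for every j = 1,…,p; that is, the middle convolution mc_λ(A_1,…,A_p) is equivalent to the tuple (E_1(A+λI_n),…,E_p(A+λI_n)), the tuple of residue matrices of the Okubo-normal-form system with coefficient matrix A + λI_n. -/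

import Mathlib

open Matrix

/-- For the partition `n = n_1 + ⋯ + n_p`, realized by the index type
`Σ i, Fin (n_i)`, the diagonal idempotent `E_i` which is the identity on the rows of the
`i`-th block and zero elsewhere. -/
noncomputable def Eproj (p : ℕ) (nn : Fin p → ℕ) (i : Fin p) :
    Matrix ((j : Fin p) × Fin (nn j)) ((j : Fin p) × Fin (nn j)) ℂ :=
  fun x y => if x = y ∧ x.1 = i then 1 else 0

/-- The block matrix `G_j ∈ M(pn,ℂ)` of the (middle) convolution: its `j`-th block row is
`(A_1, …, A_{j-1}, A_j + λI, A_{j+1}, …, A_p)` and all other block rows vanish. -/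
noncomputable def Gmat {ι : Type} [Fintype ι] [DecidableEq ι] (p : ℕ)
    (B : Fin p → Matrix ι ι ℂ) (lam : ℂ) (j : Fin p) :
    Matrix (Fin p × ι) (Fin p × ι) ℂ :=
  fun x y => if x.1 = j then
    (B y.1 + if y.1 = j then lam • (1 : Matrix ι ι ℂ) else 0) x.2 y.2
  else 0

/-- The block-diagonal matrix `Ã = diag(A_1,…,A_p) ∈ M(pn,ℂ)`. -/
noncomputable def Atil {ι : Type} [Fintype ι] [DecidableEq ι] (p : ℕ)
    (B : Fin p → Matrix ι ι ℂ) : Matrix (Fin p × ι) (Fin p × ι) ℂ :=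
  fun x y => if x.1 = y.1 then B x.1 x.2 y.2 else 0

/-- The auxiliary `n × pn` matrix whose `k`-th block column is `A_k = E_k A`;
`M x = ∑ₖ A_k x_k`.  It intertwines the convolution tuple with the Okubo tuple of
`A + λI` and realizes the quotient by `K + L_λ`. -/
noncomputable def Mmat (p : ℕ) (nn : Fin p → ℕ)
    (A : Matrix ((j : Fin p) × Fin (nn j)) ((j : Fin p) × Fin (nn j)) ℂ) :
    Matrix ((j : Fin p) × Fin (nn j)) (Fin p × ((j : Fin p) × Fin (nn j))) ℂ :=
  fun r c => if r.1 = c.1 then A r c.2 else 0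

section AuxLemmas

variable (p : ℕ) (nn : Fin p → ℕ)
  (A : Matrix ((j : Fin p) × Fin (nn j)) ((j : Fin p) × Fin (nn j)) ℂ)

lemma Eproj_mul_apply (i : Fin p)
    (B : Matrix ((j : Fin p) × Fin (nn j)) ((j : Fin p) × Fin (nn j)) ℂ)
    (x y : (j : Fin p) × Fin (nn j)) :
    (Eproj p nn i * B) x y = if x.1 = i then B x y else 0 := by
  simp [Matrix.mul_apply, Eproj, ite_and, Finset.sum_ite_eq]

lemma mulVec_Mmat (x : Fin p × ((j : Fin p) × Fin (nn j)) → ℂ)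
    (r : (j : Fin p) × Fin (nn j)) :
    (Mmat p nn A).mulVec x r = ∑ s, A r s * x (r.1, s) := by
  simp [Matrix.mulVec, dotProduct, Mmat, Fintype.sum_prod_type, ite_mul,
    Finset.sum_ite_eq, Finset.sum_ite_eq']

lemma mulVec_Atil (x : Fin p × ((j : Fin p) × Fin (nn j)) → ℂ) (k : Fin p)
    (r : (j : Fin p) × Fin (nn j)) :
    (Atil p (fun i => Eproj p nn i * A)).mulVec x (k, r) =
      if r.1 = k then (Mmat p nn A).mulVec x r else 0 := by
  rw [mulVec_Mmat]
  simp only [Matrix.mulVec, dotProduct, Atil, Fintype.sum_prod_type]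
  simp [Eproj_mul_apply, ite_mul, Finset.sum_ite_eq, Finset.sum_ite_eq']
  split
  · rename_i h; subst h; rfl
  · rfl

lemma sumG_apply {ι : Type} [Fintype ι] [DecidableEq ι] (B : Fin p → Matrix ι ι ℂ)
    (lam : ℂ) (j m : Fin p) (r t : ι) :
    (∑ k, Gmat p B lam k) (j, r) (m, t) =
      B m r t + if m = j then lam * (if r = t then 1 else 0) else 0 := by
  simp [Matrix.sum_apply, Gmat, Finset.sum_ite_eq, Matrix.one_apply,
    apply_ite (f := fun (M : Matrix ι ι ℂ) => M r t)]

lemma mulVec_sumG (lam : ℂ) (x : Fin p × ((j : Fin p) × Fin (nn j)) → ℂ) (j : Fin p)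
    (r : (j : Fin p) × Fin (nn j)) :
    ((∑ k, Gmat p (fun i => Eproj p nn i * A) lam k).mulVec x) (j, r) =
      (Mmat p nn A).mulVec x r + lam * x (j, r) := by
  rw [mulVec_Mmat]
  simp only [Matrix.mulVec, dotProduct, sumG_apply, Eproj_mul_apply,
    Fintype.sum_prod_type, add_mul, ite_mul, zero_mul, Finset.sum_add_distrib]
  congr 1
  · rw [Finset.sum_comm]
    simp [Finset.sum_ite_eq]
  · simp [Finset.sum_ite_eq', Finset.sum_ite_eq, mul_comm]

lemma Gmat_apply {ι : Type} [Fintype ι] [DecidableEq ι] (B : Fin p → Matrix ι ι ℂ)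
    (lam : ℂ) (j k m : Fin p) (s t : ι) :
    Gmat p B lam k (j, s) (m, t) =
      if j = k then B m s t + (if m = k then lam * (if s = t then 1 else 0) else 0)
      else 0 := by
  by_cases h1 : j = k <;> by_cases h2 : m = k <;>
    simp [Gmat, h1, h2, Matrix.one_apply]

lemma intertwine (lam : ℂ) (j : Fin p) :
    Mmat p nn A * Gmat p (fun i => Eproj p nn i * A) lam j =
      (Eproj p nn j * (A + lam • 1)) * Mmat p nn A := by
  ext r c
  obtain ⟨m, t⟩ := c
  rw [Matrix.mul_apply, Matrix.mul_apply]
  by_cases hrj : r.1 = j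
  · subst hrj
    rw [Fintype.sum_prod_type]
    rw [Finset.sum_eq_single r.1]
    · have e1 : ∀ s, Mmat p nn A r (r.1, s) = A r s := by
        intro s; simp [Mmat]
      simp only [e1, Gmat_apply, Eproj_mul_apply, if_pos rfl, if_true,
        eq_self_iff_true, Matrix.add_apply, Matrix.smul_apply, Matrix.one_apply,
        smul_eq_mul, Mmat]
      simp only [mul_add, add_mul, Finset.sum_add_distrib]
      congr 1
      by_cases hm : m = r.1
      · subst hm
        simp [mul_ite, ite_mul, Finset.sum_ite_eq, Finset.sum_ite_eq', mul_comm]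
      · rw [Finset.sum_eq_zero, Finset.sum_eq_zero]
        · intro s _
          rcases eq_or_ne r s with rfl | hrs
          · simp [show ¬ r.fst = m from fun h => hm h.symm]
          · simp [hrs]
        · intro s _
          simp [hm]
    · intro b _ hb
      apply Finset.sum_eq_zero; intro s _
      simp [Mmat, if_neg (Ne.symm hb)]
    · intro h; exact absurd (Finset.mem_univ _) h
  · rw [Fintype.sum_prod_type]
    rw [Finset.sum_eq_zero, Finset.sum_eq_zero]
    · intro s _
      rw [Eproj_mul_apply, if_neg hrj, zero_mul]
    · intro k _
      apply Finset.sum_eq_zero; intro s _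
      rcases eq_or_ne k j with h | h
      · subst h
        have : Mmat p nn A r (k, s) = 0 := by simp [Mmat, if_neg hrj]
        rw [this, zero_mul]
      · rw [Gmat_apply, if_neg h, mul_zero]

lemma sum_Eproj : ∑ i, Eproj p nn i =
    (1 : Matrix ((j : Fin p) × Fin (nn j)) ((j : Fin p) × Fin (nn j)) ℂ) := by
  ext x y
  simp [Matrix.sum_apply, Eproj, Matrix.one_apply, ite_and, Finset.sum_ite_eq]

lemma Eproj_diag (i : Fin p) :
    Eproj p nn i = Matrix.diagonal (fun r => if r.1 = i then (1 : ℂ) else 0) := by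
  ext x y
  by_cases h : x = y
  · subst h; simp [Eproj, Matrix.diagonal, ite_and]
  · simp [Eproj, Matrix.diagonal, h, ite_and]

lemma card_block (i : Fin p) :
    Fintype.card {r : (j : Fin p) × Fin (nn j) // r.1 = i} = nn i := by
  rw [← Fintype.card_fin (nn i)]
  apply Fintype.card_congr
  exact {
    toFun := fun r => Fin.cast (congrArg nn r.2) r.1.2
    invFun := fun a => ⟨⟨i, a⟩, rfl⟩
    left_inv := by rintro ⟨⟨j, a⟩, h⟩; subst h; rfl
    right_inv := by intro a; rfl }

lemma rank_Eproj (i : Fin p) : (Eproj p nn i).rank = nn i := by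
  rw [Eproj_diag, Matrix.rank_diagonal]
  rw [← card_block p nn i]
  apply Fintype.card_congr
  apply Equiv.subtypeEquivRight
  intro r
  by_cases h : r.1 = i <;> simp [h]

lemma range_EA (i : Fin p)
    (hO : (Eproj p nn i * A).rank = nn i) :
    LinearMap.range ((Eproj p nn i * A).mulVecLin) =
      LinearMap.range ((Eproj p nn i).mulVecLin) := by
  apply Submodule.eq_of_le_of_finrank_le
  · rw [Matrix.mulVecLin_mul]
    exact LinearMap.range_comp_le_range _ _
  · show Module.finrank ℂ _ ≤ Module.finrank ℂ _
    have h1 : Module.finrank ℂ (LinearMap.range ((Eproj p nn i).mulVecLin)) = nn i :=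
      rank_Eproj p nn i
    have h2 : Module.finrank ℂ
        (LinearMap.range ((Eproj p nn i * A).mulVecLin)) = nn i := hO
    rw [h1, h2]

lemma range_le_M (i : Fin p) :
    LinearMap.range ((Eproj p nn i * A).mulVecLin) ≤
      LinearMap.range (Mmat p nn A).mulVecLin := by
  rintro _ ⟨v, rfl⟩
  refine ⟨fun c => if c.1 = i then v c.2 else 0, ?_⟩
  simp only [Matrix.mulVecLin_apply]
  funext r
  rw [mulVec_Mmat]
  by_cases h : r.1 = i <;>
    simp [h, Matrix.mulVec, dotProduct, Eproj_mul_apply, ite_mul, mul_ite]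

lemma surjM (hO : ∀ i, (Eproj p nn i * A).rank = nn i) :
    Function.Surjective (Mmat p nn A).mulVecLin := by
  rw [← LinearMap.range_eq_top, eq_top_iff]
  intro w _
  have hsum : ∀ (f : Fin p → Matrix ((j : Fin p) × Fin (nn j)) ((j : Fin p) × Fin (nn j)) ℂ)
      (v : ((j : Fin p) × Fin (nn j)) → ℂ), (∑ i, f i) *ᵥ v = ∑ i, f i *ᵥ v := by
    intro f v
    funext r
    rw [Finset.sum_apply]
    simp only [Matrix.mulVec, dotProduct, Matrix.sum_apply, Finset.sum_mul]
    exact Finset.sum_comm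
  have hw : w = ∑ i, (Eproj p nn i).mulVec w := by
    conv_lhs => rw [← Matrix.one_mulVec w, ← sum_Eproj p nn]
    exact hsum _ w
  rw [hw]
  apply Submodule.sum_mem
  intro i _
  apply range_le_M p nn A i
  rw [range_EA p nn A i (hO i)]
  exact ⟨w, rfl⟩

end AuxLemmas

/-- Let `A` satisfy the Okubo conditions, `A_j := E_j A`, and `λ ≠ 0`
with `det(A + λI) ≠ 0`. Then `mc_λ(A_1,…,A_p)`, acting on `ℂ^{pn}/(K + L_λ)`, is
equivalent (via an isomorphism `ψ` onto `ℂ^n`) to the tuple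
`(E_1(A+λI),…,E_p(A+λI))` of residue matrices of the Okubo system with matrix `A+λI`. -/
theorem stmt_8 (p : ℕ) (nn : Fin p → ℕ) (hpos : ∀ i, 0 < nn i)
    (A : Matrix ((j : Fin p) × Fin (nn j)) ((j : Fin p) × Fin (nn j)) ℂ)
    (hrank : A.rank = ∑ i, nn i)
    (hOstar : ∀ (i : Fin p) (τ : ℂ),
      ((A + τ • 1) * Eproj p nn i).rank = nn i ∧
      (Eproj p nn i * (A + τ • 1)).rank = nn i)
    (lam : ℂ) (hlam : lam ≠ 0)
    (hdet : (A + lam • (1 : Matrix ((j : Fin p) × Fin (nn j))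
      ((j : Fin p) × Fin (nn j)) ℂ)).det ≠ 0) :
    ∃ (hG : ∀ j : Fin p,
        LinearMap.ker (Atil p (fun i => Eproj p nn i * A)).mulVecLin ⊔
            LinearMap.ker (∑ k, Gmat p (fun i => Eproj p nn i * A) lam k).mulVecLin ≤
          Submodule.comap (Gmat p (fun i => Eproj p nn i * A) lam j).mulVecLin
            (LinearMap.ker (Atil p (fun i => Eproj p nn i * A)).mulVecLin ⊔
              LinearMap.ker (∑ k, Gmat p (fun i => Eproj p nn i * A) lam k).mulVecLin)),
      ∃ ψ : ((Fin p × ((j : Fin p) × Fin (nn j)) → ℂ) ⧸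
              (LinearMap.ker (Atil p (fun i => Eproj p nn i * A)).mulVecLin ⊔
                LinearMap.ker (∑ k, Gmat p (fun i => Eproj p nn i * A) lam k).mulVecLin))
            ≃ₗ[ℂ] (((j : Fin p) × Fin (nn j)) → ℂ),
        ∀ j : Fin p,
          ψ.toLinearMap ∘ₗ
              Submodule.mapQ _ _ (Gmat p (fun i => Eproj p nn i * A) lam j).mulVecLin
                (hG j) =
            (Eproj p nn j * (A + lam • 1)).mulVecLin ∘ₗ ψ.toLinearMap := by
  classical
  set f := (Mmat p nn A).mulVecLin with hf
  have hO0 : ∀ i, (Eproj p nn i * A).rank = nn i := by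
    intro i
    have := (hOstar i 0).2
    simpa using this
  have hsurj : Function.Surjective f := surjM p nn A hO0
  have hKf : LinearMap.ker (Atil p (fun i => Eproj p nn i * A)).mulVecLin =
      LinearMap.ker f := by
    ext x
    simp only [LinearMap.mem_ker, hf, Matrix.mulVecLin_apply]
    constructor
    · intro h
      funext r
      have h2 := congrFun h (r.1, r)
      rw [mulVec_Atil] at h2
      simpa using h2
    · intro h
      funext kr
      obtain ⟨k, r⟩ := kr
      rw [mulVec_Atil]
      simp [congrFun h r]
  have hLf : LinearMap.ker (∑ k, Gmat p (fun i => Eproj p nn i * A) lam k).mulVecLin ≤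
      LinearMap.ker f := by
    intro x hx
    simp only [LinearMap.mem_ker, hf, Matrix.mulVecLin_apply] at hx ⊢
    set s : ((j : Fin p) × Fin (nn j)) → ℂ := (Mmat p nn A).mulVec x with hs
    have h1 : ∀ (j : Fin p) r, s r + lam * x (j, r) = 0 := by
      intro j r
      have h2 := congrFun hx (j, r)
      rw [mulVec_sumG] at h2
      exact h2
    have hx' : ∀ (j : Fin p) r, x (j, r) = -(s r) / lam := by
      intro j r
      rw [eq_div_iff hlam]
      linear_combination h1 j r
    have hAs : (A + lam • 1) *ᵥ s = 0 := by
      have key : ∀ r, lam * s r = - ∑ t, A r t * s t := by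
        intro r
        have hsr : s r = ∑ t, A r t * x (r.1, t) := mulVec_Mmat p nn A x r
        rw [hsr, Finset.mul_sum, ← Finset.sum_neg_distrib]
        apply Finset.sum_congr rfl
        intro t _
        rw [hx' r.1 t]
        field_simp
      funext r
      rw [Matrix.add_mulVec, Matrix.smul_mulVec, Matrix.one_mulVec]
      have : (A *ᵥ s) r = ∑ t, A r t * s t := rfl
      simp only [Pi.add_apply, Pi.smul_apply, smul_eq_mul, Pi.zero_apply, this, key r]
      ring
    have hs0 : s = 0 := by
      have hu : IsUnit (A + lam • (1 : Matrix ((j : Fin p) × Fin (nn j))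
          ((j : Fin p) × Fin (nn j)) ℂ)).det := isUnit_iff_ne_zero.mpr hdet
      have h3 := congrArg (fun v => (A + lam • (1 : Matrix ((j : Fin p) × Fin (nn j))
          ((j : Fin p) × Fin (nn j)) ℂ))⁻¹ *ᵥ v) hAs
      simpa [Matrix.mulVec_mulVec, Matrix.nonsing_inv_mul _ hu, Matrix.one_mulVec,
        Matrix.mulVec_zero] using h3
    exact hs0
  have hker : LinearMap.ker (Atil p (fun i => Eproj p nn i * A)).mulVecLin ⊔
      LinearMap.ker (∑ k, Gmat p (fun i => Eproj p nn i * A) lam k).mulVecLin =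
      LinearMap.ker f :=
    le_antisymm (sup_le (le_of_eq hKf) hLf) (hKf ▸ le_sup_left)
  have hcomm : ∀ j : Fin p,
      f ∘ₗ (Gmat p (fun i => Eproj p nn i * A) lam j).mulVecLin =
        (Eproj p nn j * (A + lam • 1)).mulVecLin ∘ₗ f := by
    intro j
    rw [hf, ← Matrix.mulVecLin_mul, ← Matrix.mulVecLin_mul, intertwine]
  have hG : ∀ j : Fin p,
      LinearMap.ker (Atil p (fun i => Eproj p nn i * A)).mulVecLin ⊔
          LinearMap.ker (∑ k, Gmat p (fun i => Eproj p nn i * A) lam k).mulVecLin ≤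
        Submodule.comap (Gmat p (fun i => Eproj p nn i * A) lam j).mulVecLin
          (LinearMap.ker (Atil p (fun i => Eproj p nn i * A)).mulVecLin ⊔
            LinearMap.ker (∑ k, Gmat p (fun i => Eproj p nn i * A) lam k).mulVecLin) := by
    intro j x hx
    rw [hker] at hx
    simp only [Submodule.mem_comap]
    rw [hker]
    rw [LinearMap.mem_ker]
    have h4 := LinearMap.congr_fun (hcomm j) x
    simp only [LinearMap.comp_apply] at h4
    rw [h4, LinearMap.mem_ker.mp hx, map_zero]
  refine ⟨hG, ?_⟩
  have hle : LinearMap.ker (Atil p (fun i => Eproj p nn i * A)).mulVecLin ⊔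
      LinearMap.ker (∑ k, Gmat p (fun i => Eproj p nn i * A) lam k).mulVecLin ≤
      LinearMap.ker f := le_of_eq hker
  set ψ₀ := Submodule.liftQ _ f hle with hψ₀
  have hinj : Function.Injective ψ₀ := by
    rw [← LinearMap.ker_eq_bot]
    exact Submodule.ker_liftQ_eq_bot _ _ _ (ge_of_eq hker)
  have hsur : Function.Surjective ψ₀ := by
    rw [← LinearMap.range_eq_top, Submodule.range_liftQ]
    exact LinearMap.range_eq_top.mpr hsurj
  refine ⟨LinearEquiv.ofBijective ψ₀ ⟨hinj, hsur⟩, fun j => ?_⟩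
  apply LinearMap.ext
  intro y
  obtain ⟨x, rfl⟩ := Submodule.Quotient.mk_surjective _ y
  simp only [LinearMap.comp_apply, Submodule.mapQ_apply, LinearEquiv.coe_coe,
    LinearEquiv.ofBijective_apply, hψ₀, Submodule.liftQ_apply]
  exact LinearMap.congr_fun (hcomm j) x
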